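/- Let μ′, σ_N², 𝒫, 𝒥 > 0 satisfy 𝒫 ≥ μ′σ_N² + (μ′𝒥/2)·(1 + √(1 + 2σ_N²/𝒥)). Define g(0) = 0 and g(y) = μ′·(y + σ_N²) for y > 0, with generalized inverse g⁻¹(x) = inf{ y ≥ 0 : g(y) ≥ x }. Then the values v = (𝒫 − μ′σ_N²)/μ′, k_x = 1, and k_y = μ′𝒥(2𝒫 − μ′σ_N²)/(2(𝒫 − μ′σ_N²)²) satisfy: v ≥ max{𝒥/2, g⁻¹(𝒫)/2}, k_y ∈ (0, 1], and the three equilibrium equations k_x·(1 − 𝒥/(2v)) = 1 − k_y·(1 − 𝒫/g(2v)), k_x = 2v𝒫 / ∫₀^{2v} g(y) dy, and k_y = g(2v)·𝒥 / ∫₀^{g(2v)} g⁻¹(x) dx. -/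

import Mathlib

open Set

set_option maxHeartbeats 1600000

/-- in the no-CSI jamming game with threshold function `g(0) = 0`,
`g(y) = μ′(y + σ²)` for `y > 0`, if the transmitter budget satisfies
`𝒫 ≥ μ′σ² + (μ′𝒥/2)(1 + √(1 + 2σ²/𝒥))`, then `v = (𝒫 − μ′σ²)/μ′`, `k_x = 1` and
`k_y = μ′𝒥(2𝒫 − μ′σ²)/(2(𝒫 − μ′σ²)²)` satisfy `v ≥ max{𝒥/2, g⁻¹(𝒫)/2}`,
`k_y ∈ (0,1]`, and the three equilibrium equations. -/
theorem stmt19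
    (mu' σ Pbar Jbar : ℝ)
    (hmu' : 0 < mu') (hσ : 0 < σ) (hPbar : 0 < Pbar) (hJbar : 0 < Jbar)
    (hbudget : mu' * σ + mu' * Jbar / 2 * (1 + Real.sqrt (1 + 2 * σ / Jbar)) ≤ Pbar)
    (g : ℝ → ℝ) (hg0 : g 0 = 0) (hg : ∀ y : ℝ, 0 < y → g y = mu' * (y + σ))
    (ginv : ℝ → ℝ) (hginv : ∀ x, ginv x = sInf {y : ℝ | 0 ≤ y ∧ x ≤ g y})
    (v kx ky : ℝ)
    (hv : v = (Pbar - mu' * σ) / mu')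
    (hkx : kx = 1)
    (hky : ky = mu' * Jbar * (2 * Pbar - mu' * σ) / (2 * (Pbar - mu' * σ) ^ 2)) :
    max (Jbar / 2) (ginv Pbar / 2) ≤ v ∧
    ky ∈ Ioc (0 : ℝ) 1 ∧
    kx * (1 - Jbar / (2 * v)) = 1 - ky * (1 - Pbar / g (2 * v)) ∧
    kx = 2 * v * Pbar / (∫ y in (0 : ℝ)..(2 * v), g y) ∧
    ky = g (2 * v) * Jbar / (∫ x in (0 : ℝ)..(g (2 * v)), ginv x) := by
  have hs0 : (0:ℝ) ≤ 1 + 2 * σ / Jbar := by positivity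
  set s := Real.sqrt (1 + 2 * σ / Jbar) with hsdef
  have hs2 : s ^ 2 = 1 + 2 * σ / Jbar := Real.sq_sqrt hs0
  have hsnn : 0 ≤ s := Real.sqrt_nonneg _
  have hs1 : 1 ≤ s := by nlinarith [div_nonneg (by linarith : (0:ℝ) ≤ 2*σ) hJbar.le]
  have hb : mu' * Jbar / 2 * (1 + s) ≤ Pbar - mu' * σ := by linarith
  have hA : mu' * Jbar ≤ Pbar - mu' * σ := by nlinarith [mul_pos hmu' hJbar]
  have hApos : 0 < Pbar - mu' * σ := lt_of_lt_of_le (mul_pos hmu' hJbar) hA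
  have hvpos : 0 < v := by rw [hv]; positivity
  have hmv : mu' * v = Pbar - mu' * σ := by rw [hv]; field_simp
  have hg2v : g (2 * v) = 2 * Pbar - mu' * σ := by
    rw [hg _ (by linarith)]; linear_combination 2 * hmv
  have hB : (0:ℝ) < 2 * Pbar - mu' * σ := by linarith
  have hmσB : mu' * σ ≤ 2 * Pbar - mu' * σ := by nlinarith
  -- generalized inverse formula
  have hginv' : ∀ x : ℝ, 0 < x → ginv x = max 0 (x / mu' - σ) := by
    intro x hx
    rw [hginv]
    rcases le_or_gt (x / mu' - σ) 0 with hc | hc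
    · have hxm : x ≤ σ * mu' := (div_le_iff₀ hmu').1 (by linarith)
      have hset : {y : ℝ | 0 ≤ y ∧ x ≤ g y} = Ioi 0 := by
        ext y
        simp only [mem_setOf_eq, mem_Ioi]
        constructor
        · rintro ⟨hy0, hxy⟩
          rcases hy0.lt_or_eq with h | h
          · exact h
          · exfalso; rw [← h, hg0] at hxy; linarith
        · intro hy
          refine ⟨hy.le, ?_⟩
          rw [hg y hy]
          nlinarith [mul_pos hmu' hy]
      rw [hset, csInf_Ioi]
      exact (max_eq_left hc).symm
    · have hset : {y : ℝ | 0 ≤ y ∧ x ≤ g y} = Ici (x / mu' - σ) := by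
        ext y
        simp only [mem_setOf_eq, mem_Ici]
        constructor
        · rintro ⟨hy0, hxy⟩
          rcases hy0.lt_or_eq with h | h
          · rw [hg y h] at hxy
            rw [sub_le_iff_le_add, div_le_iff₀ hmu']
            nlinarith
          · exfalso; rw [← h, hg0] at hxy
            have : 0 < x / mu' := by positivity
            linarith
        · intro hy
          have hy0 : 0 < y := lt_of_lt_of_le hc hy
          refine ⟨hy0.le, ?_⟩
          rw [hg y hy0]
          have h1 : x / mu' ≤ y + σ := by linarith
          calc x = mu' * (x / mu') := by field_simp
          _ ≤ mu' * (y + σ) := by nlinarith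
      rw [hset, csInf_Ici]
      exact (max_eq_right hc.le).symm
  have hginvP : ginv Pbar = v := by
    have h1 : Pbar / mu' - σ = (Pbar - mu' * σ) / mu' := by field_simp
    rw [hginv' Pbar hPbar, h1, hv, max_eq_right (div_nonneg hApos.le hmu'.le)]
  -- first integral
  have hI2 : (∫ y in (0:ℝ)..(2*v), g y) = 2 * v * Pbar := by
    have h1 : (∫ y in (0:ℝ)..(2*v), g y) = ∫ y in (0:ℝ)..(2*v), mu' * (y + σ) := by
      apply intervalIntegral.integral_congr_ae
      filter_upwards with y hy
      rw [Set.uIoc_of_le (by linarith : (0:ℝ) ≤ 2*v)] at hy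
      exact hg y hy.1
    rw [h1, intervalIntegral.integral_const_mul,
      intervalIntegral.integral_add (Continuous.intervalIntegrable (by fun_prop) _ _)
        intervalIntegrable_const,
      integral_id, intervalIntegral.integral_const]
    simp only [smul_eq_mul]
    linear_combination (2*v) * hmv
  -- second integral
  have hI3 : (∫ x in (0:ℝ)..(g (2*v)), ginv x) = 2 * (Pbar - mu' * σ)^2 / mu' := by
    rw [hg2v]
    have h1 : (∫ x in (0:ℝ)..(2*Pbar - mu'*σ), ginv x)
        = ∫ x in (0:ℝ)..(2*Pbar - mu'*σ), max 0 (x / mu' - σ) := by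
      apply intervalIntegral.integral_congr_ae
      filter_upwards with x hx
      rw [Set.uIoc_of_le hB.le] at hx
      exact hginv' x hx.1
    have hcont : Continuous (fun x : ℝ => max 0 (x / mu' - σ)) := by fun_prop
    have hsplit : (∫ x in (0:ℝ)..(2*Pbar - mu'*σ), max 0 (x / mu' - σ))
        = (∫ x in (0:ℝ)..(mu'*σ), max 0 (x / mu' - σ))
          + ∫ x in (mu'*σ:ℝ)..(2*Pbar - mu'*σ), max 0 (x / mu' - σ) :=
      (intervalIntegral.integral_add_adjacent_intervals (hcont.intervalIntegrable _ _)
        (hcont.intervalIntegrable _ _)).symm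
    have hz : (∫ x in (0:ℝ)..(mu'*σ), max 0 (x / mu' - σ)) = 0 := by
      have heq : Set.EqOn (fun x : ℝ => max 0 (x / mu' - σ)) (fun _ => (0:ℝ))
          (Set.uIcc 0 (mu'*σ)) := by
        intro x hx
        rw [Set.uIcc_of_le (by positivity)] at hx
        have h2 : x / mu' ≤ σ := (div_le_iff₀ hmu').2 (by linarith [hx.2, mul_comm mu' σ])
        exact max_eq_left (by linarith)
      rw [intervalIntegral.integral_congr heq, intervalIntegral.integral_zero]
    have h2 : (∫ x in (mu'*σ:ℝ)..(2*Pbar - mu'*σ), max 0 (x / mu' - σ))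
        = ∫ x in (mu'*σ:ℝ)..(2*Pbar - mu'*σ), (x / mu' - σ) := by
      apply intervalIntegral.integral_congr
      intro x hx
      rw [Set.uIcc_of_le hmσB] at hx
      have h0 : σ ≤ x / mu' := (le_div_iff₀ hmu').2 (by linarith [hx.1, mul_comm mu' σ])
      exact max_eq_right (by linarith)
    have h3 : (∫ x in (mu'*σ:ℝ)..(2*Pbar - mu'*σ), (x / mu' - σ))
        = 2 * (Pbar - mu' * σ)^2 / mu' := by
      rw [intervalIntegral.integral_sub (by apply Continuous.intervalIntegrable; fun_prop)
        intervalIntegrable_const]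
      rw [intervalIntegral.integral_div, integral_id,
        intervalIntegral.integral_const]
      field_simp
      ring
    rw [h1, hsplit, hz, h2, h3, zero_add]
  -- ky bounds
  have hkypos : 0 < ky := by
    rw [hky]
    exact div_pos (mul_pos (mul_pos hmu' hJbar) hB) (mul_pos two_pos (pow_pos hApos 2))
  have hkyle : ky ≤ 1 := by
    rw [hky, div_le_one (mul_pos two_pos (pow_pos hApos 2))]
    have key : 0 ≤ (Pbar - mu'*σ - mu'*Jbar/2*(1+s)) * (Pbar - mu'*σ + mu'*Jbar/2*(s-1)) := by
      apply mul_nonneg (by linarith)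
      have : 0 ≤ mu'*Jbar/2*(s-1) := by
        apply mul_nonneg (by positivity) (by linarith)
      linarith
    have hs2' : Jbar * s ^ 2 = Jbar + 2 * σ := by
      rw [hs2]; field_simp
    have h4 : mu'^2 * Jbar^2 * s^2 = mu'^2 * Jbar^2 + 2 * mu'^2 * Jbar * σ := by
      linear_combination mu'^2 * Jbar * hs2'
    nlinarith [key, h4]
  refine ⟨?_, ⟨hkypos, hkyle⟩, ?_, ?_, ?_⟩
  · have hJv : Jbar ≤ v := by
      have h := hA
      rw [← hmv] at h
      exact le_of_mul_le_mul_left h hmu'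
    rw [hginvP]
    exact max_le (by linarith) (by linarith)
  · rw [hkx, hky, hg2v, hv]
    field_simp
    ring
  · rw [hkx, hI2, div_self (by positivity)]
  · rw [hky, hI3, hg2v]
    field_simp
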